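/- arXiv:2008.01238 — 10 statements merged into one kernel-verified Lean document; each statement's English description precedes it below -/
import Mathlib

section
/- For every integer K ≥ 1, integer M with 1 ≤ M < K, and α ∈ [0,1], a nonnegative tuple d = (d_1,…,d_K) ∈ ℝ^K satisfies the all-subsets outer-bound description — namely, for every nonempty subset U ⊆ {1,…,K}, ∑_{k∈U} d_k ≤ 1 + α·max(|U ∩ K_α| − 1, 0) — if and only if d lies in the DoF polyhedron D, i.e., for every nonempty subset S ⊆ K_α, ∑_{k∈S} d_k + ∑_{k∈K_0} d_k ≤ 1 + (|S|−1)α. (This is the claim in the converse of Theorem 1 that, after removing the redundant inequalities, the outer bound coincides with the region D.) -/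
/-- For every integer `K ≥ 1`, integer `M` with `1 ≤ M < K`, and `α ∈ [0,1]`, a nonnegative
tuple `d ∈ ℝ^K` satisfies the all-subsets outer-bound description (for every nonempty
`U ⊆ {1,…,K}`, `∑_{k∈U} d_k ≤ 1 + α·max(|U ∩ K_α| − 1, 0)`) if and only if `d` lies in the
DoF polyhedron `D`: for every nonempty `S ⊆ K_α`,
`∑_{k∈S} d_k + ∑_{k∈K_0} d_k ≤ 1 + (|S|−1)α`. Here `K_α` is the set of the first `M` indices
and `K_0` the remaining `K − M` indices. -/
theorem outer_bound_coincides_with_D (K M : ℕ) (hK : 1 ≤ K) (hM : 1 ≤ M) (hMK : M < K)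
    (α : ℝ) (hα0 : 0 ≤ α) (hα1 : α ≤ 1)
    (d : Fin K → ℝ) (hd : ∀ k, 0 ≤ d k) :
    (∀ U : Finset (Fin K), U.Nonempty →
      ∑ k ∈ U, d k ≤ 1 + α * max (((Finset.filter (fun k : Fin K => (k : ℕ) < M) U).card : ℝ) - 1) 0) ↔
    (∀ S : Finset (Fin K), S.Nonempty → (∀ k ∈ S, (k : ℕ) < M) →
      ∑ k ∈ S, d k + ∑ k ∈ Finset.univ.filter (fun k : Fin K => M ≤ (k : ℕ)), d k
        ≤ 1 + ((S.card : ℝ) - 1) * α) := by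
  set K0 : Finset (Fin K) := Finset.univ.filter (fun k : Fin K => M ≤ (k : ℕ)) with hK0
  constructor
  · intro h S hS hSsub
    have hdisj : Disjoint S K0 := by
      rw [Finset.disjoint_left]
      intro k hk hk0
      have h1 := hSsub k hk
      have h2 := (Finset.mem_filter.mp hk0).2
      omega
    have hUne : (S ∪ K0).Nonempty := hS.mono Finset.subset_union_left
    have hfilt : Finset.filter (fun k : Fin K => (k : ℕ) < M) (S ∪ K0) = S := by
      ext k
      simp only [Finset.mem_filter, Finset.mem_union, hK0, Finset.mem_univ, true_and]
      constructor
      · rintro ⟨hk | hk, hlt⟩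
        · exact hk
        · omega
      · intro hk
        exact ⟨Or.inl hk, hSsub k hk⟩
    have := h (S ∪ K0) hUne
    rw [hfilt, Finset.sum_union hdisj] at this
    have hcard : 1 ≤ S.card := hS.card_pos
    have hmax : max ((S.card : ℝ) - 1) 0 = (S.card : ℝ) - 1 := by
      apply max_eq_left
      have : (1 : ℝ) ≤ (S.card : ℝ) := by exact_mod_cast hcard
      linarith
    rw [hmax] at this
    linarith [this]
  · intro h U hU
    set S : Finset (Fin K) := U.filter (fun k : Fin K => (k : ℕ) < M) with hS
    have hsplit : ∑ k ∈ S, d k + ∑ k ∈ U.filter (fun k : Fin K => ¬ (k : ℕ) < M), d k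
        = ∑ k ∈ U, d k := Finset.sum_filter_add_sum_filter_not U _ _
    have hTsub : U.filter (fun k : Fin K => ¬ (k : ℕ) < M) ⊆ K0 := by
      intro k hk
      rw [Finset.mem_filter] at hk
      rw [hK0, Finset.mem_filter]
      exact ⟨Finset.mem_univ k, by omega⟩
    have hTle : ∑ k ∈ U.filter (fun k : Fin K => ¬ (k : ℕ) < M), d k ≤ ∑ k ∈ K0, d k :=
      Finset.sum_le_sum_of_subset_of_nonneg hTsub (fun k _ _ => hd k)
    rcases S.eq_empty_or_nonempty with hSe | hSne
    · -- S empty: use the singleton {⟨0,_⟩}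
      have hk0 : (0 : ℕ) < K := hK
      set k0 : Fin K := ⟨0, hk0⟩ with hk0def
      have h1 := h {k0} (Finset.singleton_nonempty k0) (by
        intro k hk
        rw [Finset.mem_singleton] at hk
        subst hk
        exact Nat.lt_of_lt_of_le Nat.zero_lt_one hM)
      rw [Finset.sum_singleton, Finset.card_singleton] at h1
      have hsum0 : ∑ k ∈ S, d k = 0 := by rw [hSe]; simp
      have hKle : ∑ k ∈ K0, d k ≤ 1 := by
        have := hd k0
        have : (1:ℝ) + ((1:ℕ) - 1 : ℝ) * α = 1 := by norm_num
        linarith [hd k0, h1, this]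
      have hmaxge : (0:ℝ) ≤ max (((S.card : ℝ)) - 1) 0 := le_max_right _ _
      have : ∑ k ∈ U, d k ≤ 1 := by
        rw [← hsplit, hsum0]
        linarith
      nlinarith [mul_nonneg hα0 hmaxge]
    · have h1 := h S hSne (by
        intro k hk
        exact (Finset.mem_filter.mp hk).2)
      have hcard : 1 ≤ S.card := hSne.card_pos
      have hmax : max ((S.card : ℝ) - 1) 0 = (S.card : ℝ) - 1 := by
        apply max_eq_left
        have : (1 : ℝ) ≤ (S.card : ℝ) := by exact_mod_cast hcard
        linarith
      rw [hmax]
      have : ∑ k ∈ U, d k ≤ ∑ k ∈ S, d k + ∑ k ∈ K0, d k := by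
        rw [← hsplit]; linarith
      nlinarith [h1, this]
end

section
/- Let M ≥ 1 be an integer, α ∈ [0,1], and let S ⊆ K_α = {1,…,M} be a subset with |S| ≥ 2. For nonnegative reals d_1,…,d_M and d_Σ ≥ 0, the following two conditions are equivalent: (i) ∑_{i∈S} d_i + d_Σ = 1 + (|S|−1)α and, for every nonempty subset S̄ ⊆ K_α, ∑_{i∈S̄} d_i + d_Σ ≤ 1 + (|S̄|−1)α; (ii) ∑_{i∈S} d_i + d_Σ = 1 + (|S|−1)α, d_i ≥ α for all i ∈ S, and d_i ≤ α for all i ∈ K_α \ S. (This is the facet characterization used in the achievability proof of Theorem 1.) -/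
/-- Facet characterization used in the achievability proof of Theorem 1. Let `M ≥ 1`,
`α ∈ [0,1]`, and `S ⊆ K_α = {1,…,M}` with `|S| ≥ 2`. For nonnegative reals `d_1,…,d_M`
and `d_Σ ≥ 0`, the following are equivalent:
(i) `∑_{i∈S} d_i + d_Σ = 1 + (|S|−1)α` and for every nonempty `S̄ ⊆ K_α`,
    `∑_{i∈S̄} d_i + d_Σ ≤ 1 + (|S̄|−1)α`;
(ii) `∑_{i∈S} d_i + d_Σ = 1 + (|S|−1)α`, `d_i ≥ α` for all `i ∈ S`, and `d_i ≤ α` for all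
    `i ∈ K_α \ S`. -/
theorem facet_characterization (M : ℕ) (hM : 1 ≤ M) (α : ℝ) (hα0 : 0 ≤ α) (hα1 : α ≤ 1)
    (S : Finset (Fin M)) (hS : 2 ≤ S.card)
    (d : Fin M → ℝ) (hd : ∀ i, 0 ≤ d i) (dSigma : ℝ) (hdSigma : 0 ≤ dSigma) :
    ((∑ i ∈ S, d i + dSigma = 1 + ((S.card : ℝ) - 1) * α) ∧
      (∀ S' : Finset (Fin M), S'.Nonempty →
        ∑ i ∈ S', d i + dSigma ≤ 1 + ((S'.card : ℝ) - 1) * α)) ↔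
    ((∑ i ∈ S, d i + dSigma = 1 + ((S.card : ℝ) - 1) * α) ∧
      (∀ i ∈ S, α ≤ d i) ∧ (∀ i, i ∉ S → d i ≤ α)) := by
  constructor
  · rintro ⟨heq, hineq⟩
    refine ⟨heq, ?_, ?_⟩
    · intro i hi
      have hne : (S.erase i).Nonempty := by
        rw [← Finset.card_pos, Finset.card_erase_of_mem hi]
        omega
      have h1 := hineq (S.erase i) hne
      have hcard : ((S.erase i).card : ℝ) = (S.card : ℝ) - 1 := by
        rw [Finset.card_erase_of_mem hi]
        have : 1 ≤ S.card := by omega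
        push_cast [Nat.cast_sub this]
        ring
      have hsum : ∑ j ∈ S.erase i, d j + d i = ∑ j ∈ S, d j :=
        Finset.sum_erase_add S d hi
      rw [hcard] at h1
      linarith
    · intro i hi
      have h1 := hineq (insert i S) ⟨i, Finset.mem_insert_self i S⟩
      rw [Finset.sum_insert hi, Finset.card_insert_of_notMem hi] at h1
      push_cast at h1
      linarith
  · rintro ⟨heq, hge, hle⟩
    refine ⟨heq, fun S' _ => ?_⟩
    have h1 : ∑ i ∈ S' \ S, d i ≤ ((S' \ S).card : ℝ) * α := by
      have := Finset.sum_le_card_nsmul (S' \ S) d α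
        (fun i hi => hle i (Finset.mem_sdiff.mp hi).2)
      simpa [nsmul_eq_mul] using this
    have h2 : ((S \ S').card : ℝ) * α ≤ ∑ i ∈ S \ S', d i := by
      have := Finset.card_nsmul_le_sum (S \ S') d α
        (fun i hi => hge i (Finset.mem_sdiff.mp hi).1)
      simpa [nsmul_eq_mul] using this
    have hs1 : ∑ i ∈ S' ∩ S, d i + ∑ i ∈ S' \ S, d i = ∑ i ∈ S', d i :=
      Finset.sum_inter_add_sum_sdiff S' S d
    have hs2 : ∑ i ∈ S ∩ S', d i + ∑ i ∈ S \ S', d i = ∑ i ∈ S, d i :=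
      Finset.sum_inter_add_sum_sdiff S S' d
    have hint : ∑ i ∈ S' ∩ S, d i = ∑ i ∈ S ∩ S', d i := by
      rw [Finset.inter_comm]
    have hcard : ((S.card : ℝ)) + ((S' \ S).card : ℝ) = (S'.card : ℝ) + ((S \ S').card : ℝ) := by
      have a1 : (S' \ S).card + S.card = (S' ∪ S).card := Finset.card_sdiff_add_card S' S
      have a2 : (S \ S').card + S'.card = (S ∪ S').card := Finset.card_sdiff_add_card S S'
      have : (S' ∪ S) = (S ∪ S') := Finset.union_comm S' S
      rw [this] at a1
      have : (S' \ S).card + S.card = (S \ S').card + S'.card := by omega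
      exact_mod_cast by omega
    nlinarith [h1, h2]
end

section
/- Let M and K be integers with 1 ≤ M < K and let α ∈ [0,1]. The maximum of the sum ∑_{k=1}^K d_k over all d in the DoF polyhedron D equals 1 + (M−1)α, and it is attained at the point d* defined by d*_k = α for k ∈ K_α, d*_{M+1} = 1−α, and d*_k = 0 for k ∈ K_0 \ {M+1}; in particular, when α < 1 the sum-DoF optimum is attained at a point of D giving strictly positive DoF to a statistical-CSIT user. -/
/-- Membership in the DoF polyhedron `D` of the overloaded MISO BC: `d_k ≥ 0` for all `k`,
and for every nonempty `S ⊆ K_α = {1,…,M}` (indices `k` with `(k:ℕ) < M`),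
`∑_{k∈S} d_k + ∑_{k∈K_0} d_k ≤ 1 + (|S|−1)α`, where `K_0 = {M+1,…,K}` is the set of indices
`k` with `M ≤ (k:ℕ)`. -/
def memD (K M : ℕ) (α : ℝ) (d : Fin K → ℝ) : Prop :=
  (∀ k, 0 ≤ d k) ∧
  ∀ S : Finset (Fin K), S.Nonempty → (∀ k ∈ S, (k : ℕ) < M) →
    ∑ k ∈ S, d k + ∑ k ∈ Finset.univ.filter (fun k : Fin K => M ≤ (k : ℕ)), d k
      ≤ 1 + ((S.card : ℝ) - 1) * α

/-- The maximum of `∑_k d_k` over the DoF polyhedron `D` equals `1 + (M−1)α`, attained at the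
point `d*` with `d*_k = α` for `k ∈ K_α`, `d*_{M+1} = 1 − α` and `d*_k = 0` for the remaining
statistical-CSIT users; in particular, when `α < 1` the sum-DoF optimum is attained at a point
of `D` giving strictly positive DoF to a statistical-CSIT user. -/
theorem sum_dof_optimum (K M : ℕ) (hM : 1 ≤ M) (hMK : M < K)
    (α : ℝ) (hα0 : 0 ≤ α) (hα1 : α ≤ 1) :
    IsGreatest {s : ℝ | ∃ d : Fin K → ℝ, memD K M α d ∧ s = ∑ k, d k}
      (1 + ((M : ℝ) - 1) * α) ∧
    memD K M α (fun k => if (k : ℕ) < M then α else if (k : ℕ) = M then 1 - α else 0) ∧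
    (∑ k : Fin K, (if (k : ℕ) < M then α else if (k : ℕ) = M then 1 - α else 0))
      = 1 + ((M : ℝ) - 1) * α ∧
    (α < 1 → ∃ k : Fin K, M ≤ (k : ℕ) ∧
      0 < (if (k : ℕ) < M then α else if (k : ℕ) = M then 1 - α else 0)) := by

  have hK0 : 0 < K := lt_of_le_of_lt (Nat.zero_le M) hMK
  set mK : Fin K := ⟨M, hMK⟩ with hmK
  set dstar : Fin K → ℝ :=
    (fun k => if (k : ℕ) < M then α else if (k : ℕ) = M then 1 - α else 0) with hdstar
  have hfilter : Finset.univ.filter (fun k : Fin K => (k:ℕ) < M) = Finset.Iio mK := by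
    ext k; simp [Finset.mem_Iio, Fin.lt_def, hmK]
  have hcard : (Finset.univ.filter (fun k : Fin K => (k:ℕ) < M)).card = M := by
    rw [hfilter]; simp [hmK]
  have hnotlt : Finset.univ.filter (fun k : Fin K => ¬ (k:ℕ) < M)
      = Finset.univ.filter (fun k : Fin K => M ≤ (k:ℕ)) := by
    simp [not_lt]
  have hsum0 : ∑ k ∈ Finset.univ.filter (fun k : Fin K => M ≤ (k:ℕ)), dstar k = 1 - α := by
    have h1 : ∀ k ∈ Finset.univ.filter (fun k : Fin K => M ≤ (k:ℕ)),
        dstar k = if k = mK then 1 - α else 0 := by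
      intro k hk
      simp only [Finset.mem_filter] at hk
      have hnl : ¬ (k:ℕ) < M := not_lt.2 hk.2
      have : ((k:ℕ) = M) ↔ k = mK := by
        constructor
        · intro h; exact Fin.ext h
        · intro h; rw [h]
      simp [hdstar, hnl, this]
    rw [Finset.sum_congr rfl h1, Finset.sum_ite_eq' _ mK (fun _ => 1 - α)]
    simp [hmK]
  have hSsum : ∀ S : Finset (Fin K), (∀ k ∈ S, (k:ℕ) < M) →
      ∑ k ∈ S, dstar k = (S.card : ℝ) * α := by
    intro S hS
    have h : ∀ k ∈ S, dstar k = α := fun k hk => by simp [hdstar, hS k hk]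
    rw [Finset.sum_congr rfl h, Finset.sum_const, nsmul_eq_mul]
  have hmem : memD K M α dstar := by
    constructor
    · intro k
      simp only [hdstar]
      split_ifs
      · exact hα0
      · linarith
      · exact le_refl 0
    · intro S hSne hSlt
      rw [hSsum S hSlt, hsum0]
      ring_nf
      linarith
  have htot : ∑ k, dstar k = 1 + ((M : ℝ) - 1) * α := by
    rw [← Finset.sum_filter_add_sum_filter_not Finset.univ (fun k : Fin K => (k:ℕ) < M) dstar,
      hnotlt, hsum0, hSsum _ (fun k hk => (Finset.mem_filter.1 hk).2), hcard]
    ring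
  refine ⟨⟨⟨dstar, hmem, htot.symm⟩, ?_⟩, hmem, htot, ?_⟩
  · rintro s ⟨d, ⟨hpos, hcon⟩, rfl⟩
    have hSne : (Finset.univ.filter (fun k : Fin K => (k:ℕ) < M)).Nonempty := by
      refine ⟨⟨0, hK0⟩, ?_⟩
      exact Finset.mem_filter.2 ⟨Finset.mem_univ _, hM⟩
    have := hcon _ hSne (fun k hk => (Finset.mem_filter.1 hk).2)
    rw [hcard] at this
    calc ∑ k, d k
        = ∑ k ∈ Finset.univ.filter (fun k : Fin K => (k:ℕ) < M), d k
          + ∑ k ∈ Finset.univ.filter (fun k : Fin K => M ≤ (k:ℕ)), d k := by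
          rw [← hnotlt, Finset.sum_filter_add_sum_filter_not]
      _ ≤ 1 + ((M : ℝ) - 1) * α := this
  · intro hlt
    refine ⟨mK, le_refl _, ?_⟩
    simp [hmK]
    linarith
end

section
/- Let M and K be integers with 1 ≤ M < K, and let α, β ∈ [0,1]. The symmetric PP–RSMA DoF tuple d^PP ∈ ℝ^K defined by d^PP_k = (β + (M−1)·min{α,β})/M for k ∈ K_α and d^PP_k = (1−β)/(K−M) for k ∈ K_0 lies in the DoF polyhedron D; that is, d^PP_k ≥ 0 for all k and, for every nonempty S ⊆ K_α, |S|·(β + (M−1)·min{α,β})/M + (1−β) ≤ 1 + (|S|−1)α. -/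
lemma pp_key (M s : ℕ) (hM : 1 ≤ M) (hs1 : 1 ≤ s) (hsM : s ≤ M)
    (α β : ℝ) (hα0 : 0 ≤ α) (hβ0 : 0 ≤ β) :
    (s : ℝ) * ((β + ((M : ℝ) - 1) * min α β) / M) + (1 - β) ≤ 1 + ((s : ℝ) - 1) * α := by
  have hMpos : (0 : ℝ) < M := by exact_mod_cast hM
  have hs1' : (1 : ℝ) ≤ s := by exact_mod_cast hs1
  have hsM' : (s : ℝ) ≤ M := by exact_mod_cast hsM
  have hmα : min α β ≤ α := min_le_left _ _
  have hmβ : min α β ≤ β := min_le_right _ _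
  have h : (s : ℝ) * (β + ((M : ℝ) - 1) * min α β) ≤ (M : ℝ) * (β + ((s : ℝ) - 1) * α) := by
    nlinarith [mul_nonneg (sub_nonneg.2 hsM') (sub_nonneg.2 hmβ),
      mul_nonneg (mul_nonneg hMpos.le (sub_nonneg.2 hs1')) (sub_nonneg.2 hmα)]
  have h2 : (s : ℝ) * ((β + ((M : ℝ) - 1) * min α β) / M)
      = (s : ℝ) * (β + ((M : ℝ) - 1) * min α β) / M := (mul_div_assoc _ _ _).symm
  rw [h2]
  have h3 : (s : ℝ) * (β + ((M : ℝ) - 1) * min α β) / M ≤ (M : ℝ) * (β + ((s : ℝ) - 1) * α) / M :=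
    div_le_div_of_nonneg_right h hMpos.le
  rw [mul_div_cancel_left₀ _ hMpos.ne'] at h3
  linarith

/-- The symmetric PP–RSMA DoF tuple `d^PP`, with `d^PP_k = (β + (M−1)·min{α,β})/M` for the
partial-CSIT users `k ∈ K_α` and `d^PP_k = (1−β)/(K−M)` for the statistical-CSIT users
`k ∈ K_0`, lies in the DoF polyhedron `D`: all entries are nonnegative and, for every
nonempty `S ⊆ K_α`, `|S|·(β + (M−1)·min{α,β})/M + (1−β) ≤ 1 + (|S|−1)α`. -/
theorem pp_rsma_dof_achievable (K M : ℕ) (hM : 1 ≤ M) (hMK : M < K)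
    (α β : ℝ) (hα0 : 0 ≤ α) (hα1 : α ≤ 1) (hβ0 : 0 ≤ β) (hβ1 : β ≤ 1) :
    memD K M α (fun k =>
      if (k : ℕ) < M then (β + ((M : ℝ) - 1) * min α β) / M
      else (1 - β) / ((K : ℝ) - M)) ∧
    (∀ s : ℕ, 1 ≤ s → s ≤ M →
      (s : ℝ) * ((β + ((M : ℝ) - 1) * min α β) / M) + (1 - β) ≤ 1 + ((s : ℝ) - 1) * α) := by
  have hMpos : (0 : ℝ) < M := by exact_mod_cast hM
  have hKM : (0 : ℝ) < (K : ℝ) - M := by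
    have : (M : ℝ) < K := by exact_mod_cast hMK
    linarith
  have hm0 : 0 ≤ min α β := le_min hα0 hβ0
  have hM1 : (0 : ℝ) ≤ (M : ℝ) - 1 := by
    have : (1 : ℝ) ≤ M := by exact_mod_cast hM
    linarith
  constructor
  · constructor
    · intro k
      by_cases h : (k : ℕ) < M
      · simp only [h, if_true]
        positivity
      · simp only [h, if_false]
        apply div_nonneg (by linarith) hKM.le
    · intro S hSne hSsub
      -- sum over S
      have hsum1 : ∑ k ∈ S, (if (k : ℕ) < M then (β + ((M : ℝ) - 1) * min α β) / M
          else (1 - β) / ((K : ℝ) - M))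
          = (S.card : ℝ) * ((β + ((M : ℝ) - 1) * min α β) / M) := by
        rw [Finset.sum_congr rfl (fun k hk => if_pos (hSsub k hk)), Finset.sum_const,
          nsmul_eq_mul]
      -- the filtered set
      have hcard : (Finset.univ.filter (fun k : Fin K => M ≤ (k : ℕ))).card = K - M := by
        have hc : (Finset.univ.filter (fun k : Fin K => (k : ℕ) < M)).card = M := by
          have : Finset.univ.filter (fun k : Fin K => (k : ℕ) < M)
              = Finset.Iio (⟨M, hMK⟩ : Fin K) := by
            ext k
            simp [Fin.lt_def]
          rw [this, Fin.card_Iio]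
        have := Finset.card_filter_add_card_filter_not
          (s := (Finset.univ : Finset (Fin K))) (p := fun k : Fin K => (k : ℕ) < M)
        simp only [Finset.card_univ, Fintype.card_fin, not_lt] at this
        omega
      have hsum2 : ∑ k ∈ Finset.univ.filter (fun k : Fin K => M ≤ (k : ℕ)),
          (if (k : ℕ) < M then (β + ((M : ℝ) - 1) * min α β) / M
          else (1 - β) / ((K : ℝ) - M)) = 1 - β := by
        have hcg : ∀ k ∈ Finset.univ.filter (fun k : Fin K => M ≤ (k : ℕ)),
            (if (k : ℕ) < M then (β + ((M : ℝ) - 1) * min α β) / M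
            else (1 - β) / ((K : ℝ) - M)) = (1 - β) / ((K : ℝ) - M) := by
          intro k hk
          rw [Finset.mem_filter] at hk
          exact if_neg (not_lt.2 hk.2)
        rw [Finset.sum_congr rfl hcg, Finset.sum_const, nsmul_eq_mul, hcard]
        have hKMcast : ((K - M : ℕ) : ℝ) = (K : ℝ) - M := by
          rw [Nat.cast_sub hMK.le]
        rw [hKMcast, mul_div_cancel₀ _ hKM.ne']
      simp only [hsum1, hsum2]
      have hScard1 : 1 ≤ S.card := Finset.Nonempty.card_pos hSne
      have hScardM : S.card ≤ M := by
        have : S ⊆ Finset.univ.filter (fun k : Fin K => (k : ℕ) < M) := fun k hk =>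
          Finset.mem_filter.2 ⟨Finset.mem_univ _, hSsub k hk⟩
        have h2 := Finset.card_le_card this
        have hc : (Finset.univ.filter (fun k : Fin K => (k : ℕ) < M)).card = M := by
          have : Finset.univ.filter (fun k : Fin K => (k : ℕ) < M)
              = Finset.Iio (⟨M, hMK⟩ : Fin K) := by
            ext k
            simp [Fin.lt_def]
          rw [this, Fin.card_Iio]
        omega
      exact pp_key M S.card hM hScard1 hScardM α β hα0 hβ0
  · intro s hs1 hsM
    exact pp_key M s hM hs1 hsM α β hα0 hβ0
end

section
/- Let M and K be integers with 1 ≤ M < K, and let α, θ ∈ [0,1]. The symmetric TP–RSMA DoF tuple d^TP ∈ ℝ^K defined by d^TP_k = θ·(1+(M−1)α)/M for k ∈ K_α and d^TP_k = (1−θ)/(K−M) for k ∈ K_0 lies in the DoF polyhedron D; that is, d^TP_k ≥ 0 for all k and, for every nonempty S ⊆ K_α, |S|·θ·(1+(M−1)α)/M + (1−θ) ≤ 1 + (|S|−1)α. -/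
lemma key_ineq (M : ℕ) (hM : 1 ≤ M) (α θ : ℝ) (hα0 : 0 ≤ α) (hα1 : α ≤ 1)
    (hθ0 : 0 ≤ θ) (hθ1 : θ ≤ 1) (s : ℕ) (hs1 : 1 ≤ s) (hsM : s ≤ M) :
    (s : ℝ) * (θ * (1 + ((M : ℝ) - 1) * α) / M) + (1 - θ) ≤ 1 + ((s : ℝ) - 1) * α := by
  have hMpos : (0:ℝ) < M := by exact_mod_cast hM
  have hs1' : (1:ℝ) ≤ s := by exact_mod_cast hs1
  have hsM' : (s:ℝ) ≤ M := by exact_mod_cast hsM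
  rw [mul_div_assoc', div_add' _ _ _ (ne_of_gt hMpos), div_le_iff₀ hMpos]
  nlinarith [mul_nonneg (sub_nonneg.2 hsM') (sub_nonneg.2 hα1),
    mul_nonneg hθ0 (mul_nonneg (sub_nonneg.2 hsM') (sub_nonneg.2 hα1)),
    mul_nonneg (sub_nonneg.2 hθ1) (mul_nonneg (sub_nonneg.2 hs1') hα0),
    mul_nonneg (sub_nonneg.2 hθ1) (mul_nonneg (sub_nonneg.2 hsM') (sub_nonneg.2 hα1))]

/-- The symmetric TP–RSMA DoF tuple `d^TP`, with `d^TP_k = θ·(1+(M−1)α)/M` for the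
partial-CSIT users `k ∈ K_α` and `d^TP_k = (1−θ)/(K−M)` for the statistical-CSIT users
`k ∈ K_0`, lies in the DoF polyhedron `D`: all entries are nonnegative and, for every
nonempty `S ⊆ K_α`, `|S|·θ·(1+(M−1)α)/M + (1−θ) ≤ 1 + (|S|−1)α`. -/
theorem tp_rsma_dof_achievable (K M : ℕ) (hM : 1 ≤ M) (hMK : M < K)
    (α θ : ℝ) (hα0 : 0 ≤ α) (hα1 : α ≤ 1) (hθ0 : 0 ≤ θ) (hθ1 : θ ≤ 1) :
    memD K M α (fun k =>
      if (k : ℕ) < M then θ * (1 + ((M : ℝ) - 1) * α) / M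
      else (1 - θ) / ((K : ℝ) - M)) ∧
    (∀ s : ℕ, 1 ≤ s → s ≤ M →
      (s : ℝ) * (θ * (1 + ((M : ℝ) - 1) * α) / M) + (1 - θ) ≤ 1 + ((s : ℝ) - 1) * α) := by
  have hMpos : (0:ℝ) < M := by exact_mod_cast hM
  have hKM : (0:ℝ) < (K:ℝ) - M := by
    have : (M:ℝ) < K := by exact_mod_cast hMK
    linarith
  have hMa : (0:ℝ) ≤ 1 + ((M:ℝ) - 1) * α := by
    have : (1:ℝ) ≤ M := by exact_mod_cast hM
    nlinarith
  refine ⟨⟨?_, ?_⟩, fun s hs1 hsM => key_ineq M hM α θ hα0 hα1 hθ0 hθ1 s hs1 hsM⟩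
  · intro k
    simp only
    by_cases h : (k:ℕ) < M
    · rw [if_pos h]; positivity
    · rw [if_neg h]
      exact div_nonneg (by linarith) hKM.le
  · intro S hS hSsub
    have hsum1 : ∑ k ∈ S, (if (k:ℕ) < M then θ * (1 + ((M : ℝ) - 1) * α) / M
        else (1 - θ) / ((K : ℝ) - M)) = S.card * (θ * (1 + ((M : ℝ) - 1) * α) / M) := by
      rw [Finset.sum_congr rfl (fun k hk => if_pos (hSsub k hk)), Finset.sum_const,
        nsmul_eq_mul]
    have hcard2 : (Finset.univ.filter (fun k : Fin K => M ≤ (k : ℕ))).card = K - M := by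
      have he : Finset.univ.filter (fun k : Fin K => M ≤ (k : ℕ)) =
          Finset.Ici (⟨M, hMK⟩ : Fin K) := by
        ext k; simp [Fin.le_def]
      rw [he, Fin.card_Ici]
    have hsum2 : ∑ k ∈ Finset.univ.filter (fun k : Fin K => M ≤ (k : ℕ)),
        (if (k:ℕ) < M then θ * (1 + ((M : ℝ) - 1) * α) / M
        else (1 - θ) / ((K : ℝ) - M)) = 1 - θ := by
      rw [Finset.sum_congr rfl (fun k hk => if_neg (by
        simpa using (Finset.mem_filter.1 hk).2.not_gt)), Finset.sum_const, hcard2,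
        nsmul_eq_mul]
      have : ((K - M : ℕ) : ℝ) = (K:ℝ) - M := by
        rw [Nat.cast_sub hMK.le]
      rw [this, mul_div_cancel₀ _ (ne_of_gt hKM)]
    have hScard : S.card ≤ M := by
      have : S ⊆ Finset.univ.filter (fun k : Fin K => (k : ℕ) < M) := fun k hk =>
        Finset.mem_filter.2 ⟨Finset.mem_univ k, hSsub k hk⟩
      have h2 : (Finset.univ.filter (fun k : Fin K => (k : ℕ) < M)).card = M := by
        have he : Finset.univ.filter (fun k : Fin K => (k : ℕ) < M) =
            Finset.Iio (⟨M, hMK⟩ : Fin K) := by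
          ext k; simp [Fin.lt_def]
        rw [he, Fin.card_Iio]
      calc S.card ≤ _ := Finset.card_le_card this
        _ = M := h2
    simp only [hsum1, hsum2]
    exact key_ineq M hM α θ hα0 hα1 hθ0 hθ1 S.card (Finset.card_pos.2 hS) hScard
end

section
/- For every integer M ≥ 1 and all θ, α ∈ [0,1], the per-user symmetric DoF of PP–RSMA with power partitioning factor β = θ dominates that of TP–RSMA with time partitioning factor θ: (θ + (M−1)·min{θ,α})/M ≥ θ·(1 + (M−1)α)/M. -/
/-- For every integer `M ≥ 1` and all `θ, α ∈ [0,1]`, the per-user symmetric DoF of PP–RSMA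
with power partitioning factor `β = θ` dominates that of TP–RSMA with time partitioning
factor `θ`: `(θ + (M−1)·min{θ,α})/M ≥ θ·(1 + (M−1)α)/M`. -/
theorem pp_dominates_tp (M : ℕ) (hM : 1 ≤ M) (θ α : ℝ)
    (hθ0 : 0 ≤ θ) (hθ1 : θ ≤ 1) (hα0 : 0 ≤ α) (hα1 : α ≤ 1) :
    θ * (1 + ((M : ℝ) - 1) * α) / M ≤ (θ + ((M : ℝ) - 1) * min θ α) / M := by
  have hMpos : (0 : ℝ) < M := by exact_mod_cast hM
  have hc : (0 : ℝ) ≤ (M : ℝ) - 1 := by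
    have : (1 : ℝ) ≤ M := by exact_mod_cast hM
    linarith
  have hmin : θ * α ≤ min θ α := by
    rcases le_total θ α with h | h
    · rw [min_eq_left h]; nlinarith
    · rw [min_eq_right h]; nlinarith
  gcongr
  nlinarith
end

section
/- Let M and K be integers with 1 ≤ M < K and θ, α ∈ [0,1]. Define d^TP ∈ ℝ^K by d^TP_k = θ·(1+(M−1)α)/M for k ∈ {1,…,M} and d^TP_k = (1−θ)/(K−M) for k ∈ {M+1,…,K}, and d^PP ∈ ℝ^K by d^PP_k = (θ + (M−1)·min{α,θ})/M for k ∈ {1,…,M} and d^PP_k = (1−θ)/(K−M) for k ∈ {M+1,…,K}. Then ∑_{k=1}^K d^TP_k = 1 + θ(M−1)α, ∑_{k=1}^K d^PP_k = 1 + (M−1)·min{α,θ}, and ∑_{k=1}^K d^PP_k ≥ ∑_{k=1}^K d^TP_k. -/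
/-- The symmetric TP–RSMA DoF tuple: `θ·(1+(M−1)α)/M` for the partial-CSIT users
(indices `k` with `(k:ℕ) < M`) and `(1−θ)/(K−M)` for the statistical-CSIT users. -/
noncomputable def dTP (K M : ℕ) (θ α : ℝ) (k : Fin K) : ℝ :=
  if (k : ℕ) < M then θ * (1 + ((M : ℝ) - 1) * α) / M else (1 - θ) / ((K : ℝ) - M)

/-- The symmetric PP–RSMA DoF tuple with power partitioning factor `β = θ`:
`(θ + (M−1)·min{α,θ})/M` for the partial-CSIT users (indices `k` with `(k:ℕ) < M`) and
`(1−θ)/(K−M)` for the statistical-CSIT users. -/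
noncomputable def dPP (K M : ℕ) (θ α : ℝ) (k : Fin K) : ℝ :=
  if (k : ℕ) < M then (θ + ((M : ℝ) - 1) * min α θ) / M else (1 - θ) / ((K : ℝ) - M)

lemma sum_ite_fin (K M : ℕ) (hMK : M ≤ K) (a b : ℝ) :
    ∑ k : Fin K, (if (k : ℕ) < M then a else b) = M * a + ((K : ℝ) - M) * b := by
  rw [Fin.sum_univ_eq_sum_range (fun i => if i < M then a else b)]
  rw [← Finset.sum_range_add_sum_Ico _ hMK]
  rw [Finset.sum_ite_of_true (fun i hi => Finset.mem_range.mp hi),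
      Finset.sum_ite_of_false (fun i hi => by have := (Finset.mem_Ico.mp hi).1; omega)]
  simp [Nat.cast_sub hMK]

/-- The sum-DoF of TP–RSMA equals `1 + θ(M−1)α`, the sum-DoF of PP–RSMA (with `β = θ`)
equals `1 + (M−1)·min{α,θ}`, and the latter dominates the former. -/
theorem sum_dof_tp_pp (K M : ℕ) (hM : 1 ≤ M) (hMK : M < K) (θ α : ℝ)
    (hθ0 : 0 ≤ θ) (hθ1 : θ ≤ 1) (hα0 : 0 ≤ α) (hα1 : α ≤ 1) :
    (∑ k : Fin K, dTP K M θ α k = 1 + θ * ((M : ℝ) - 1) * α) ∧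
    (∑ k : Fin K, dPP K M θ α k = 1 + ((M : ℝ) - 1) * min α θ) ∧
    (∑ k : Fin K, dTP K M θ α k ≤ ∑ k : Fin K, dPP K M θ α k) := by
  have hM0 : (M : ℝ) ≠ 0 := by positivity
  have hKM : (K : ℝ) - M ≠ 0 := by
    have : (M : ℝ) < K := by exact_mod_cast hMK
    linarith
  have h1 : ∑ k : Fin K, dTP K M θ α k = 1 + θ * ((M : ℝ) - 1) * α := by
    unfold dTP
    rw [sum_ite_fin K M hMK.le]
    field_simp
    ring
  have h2 : ∑ k : Fin K, dPP K M θ α k = 1 + ((M : ℝ) - 1) * min α θ := by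
    unfold dPP
    rw [sum_ite_fin K M hMK.le]
    field_simp
    ring
  refine ⟨h1, h2, ?_⟩
  rw [h1, h2]
  have hm1 : (0:ℝ) ≤ (M : ℝ) - 1 := by
    have : (1:ℝ) ≤ M := by exact_mod_cast hM
    linarith
  have : θ * α ≤ min α θ := by
    rcases le_total α θ with h | h
    · simp [min_eq_left h]; nlinarith
    · simp [min_eq_right h]; nlinarith
  nlinarith
end

section
/- Let α ∈ (0,1). The point A = (α, α, 1−α) belongs to the three-user DoF polyhedron D = {(d₁,d₂,d₃) ∈ ℝ³ : d₁,d₂,d₃ ≥ 0, d₁+d₃ ≤ 1, d₂+d₃ ≤ 1, d₁+d₂+d₃ ≤ 1+α}, but A does not belong to the time-partitioning region T = convexHull((D_RS × {0}) ∪ {(0,0,1)}). That is, the point A cannot be achieved through time partitioning. -/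
/-- The two-user rate-splitting DoF region
`D_RS = {(x,y) : 0 ≤ x ≤ 1, 0 ≤ y ≤ 1, x + y ≤ 1 + α}`. -/
def DRS (α : ℝ) : Set (ℝ × ℝ) :=
  {p | 0 ≤ p.1 ∧ p.1 ≤ 1 ∧ 0 ≤ p.2 ∧ p.2 ≤ 1 ∧ p.1 + p.2 ≤ 1 + α}

/-- The three-user DoF polyhedron `D` of Theorem 1 for `M = 2`, `K = 3`:
`{(d₁,d₂,d₃) : d₁,d₂,d₃ ≥ 0, d₁+d₃ ≤ 1, d₂+d₃ ≤ 1, d₁+d₂+d₃ ≤ 1+α}`. -/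
def Dreg (α : ℝ) : Set (ℝ × ℝ × ℝ) :=
  {d | 0 ≤ d.1 ∧ 0 ≤ d.2.1 ∧ 0 ≤ d.2.2 ∧ d.1 + d.2.2 ≤ 1 ∧ d.2.1 + d.2.2 ≤ 1 ∧
    d.1 + d.2.1 + d.2.2 ≤ 1 + α}

/-- The time-partitioning region `T = convexHull((D_RS × {0}) ∪ {(0,0,1)})`. -/
def Treg (α : ℝ) : Set (ℝ × ℝ × ℝ) :=
  convexHull ℝ (((fun p : ℝ × ℝ => (p.1, p.2, (0 : ℝ))) '' DRS α) ∪ {(0, 0, 1)})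

/-- For `α ∈ (0,1)`, the point `A = (α, α, 1−α)` belongs to the three-user DoF polyhedron
`D` but not to the time-partitioning region `T`: `A` cannot be achieved through time
partitioning. -/
theorem point_A_in_D_not_in_T (α : ℝ) (hα0 : 0 < α) (hα1 : α < 1) :
    ((α, α, 1 - α) ∈ Dreg α) ∧ ((α, α, 1 - α) ∉ Treg α) := by
  constructor
  · refine ⟨hα0.le, hα0.le, ?_, ?_, ?_, ?_⟩ <;> simp <;> linarith
  · intro hA
    have hlin : IsLinearMap ℝ (fun z : ℝ × ℝ × ℝ => z.1 + z.2.1 + (1 + α) * z.2.2) := by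
      constructor
      · intro x y; simp [Prod.fst_add, Prod.snd_add]; ring
      · intro c x; simp [Prod.smul_fst, Prod.smul_snd, smul_eq_mul]; ring
    have hcvx : Convex ℝ {z : ℝ × ℝ × ℝ | z.1 + z.2.1 + (1 + α) * z.2.2 ≤ 1 + α} :=
      convex_halfSpace_le hlin (1 + α)
    have hsub : Treg α ⊆ {z : ℝ × ℝ × ℝ | z.1 + z.2.1 + (1 + α) * z.2.2 ≤ 1 + α} := by
      apply convexHull_min _ hcvx
      rintro z (⟨p, hp, rfl⟩ | hz)
      · obtain ⟨_, _, _, _, h5⟩ := hp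
        simp only [Set.mem_setOf_eq]
        linarith
      · simp only [Set.mem_singleton_iff] at hz
        subst hz
        simp only [Set.mem_setOf_eq]
        norm_num
    have := hsub hA
    simp only [Set.mem_setOf_eq] at this
    nlinarith
end

section
/- Let α ∈ (0,1). Every point (d₁,d₂,d₃) of the time-partitioning region T = convexHull((D_RS × {0}) ∪ {(0,0,1)}) with d₃ > 0 satisfies d₁ + d₂ + d₃ < 1 + α. That is, serving the statistical-CSIT user with non-zero DoF through time partitioning strictly decreases the sum-DoF below 1+α. -/
/-- For `α ∈ (0,1)`, every point of the time-partitioning region `T` that gives the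
statistical-CSIT user a strictly positive DoF `d₃ > 0` has sum-DoF strictly below `1 + α`. -/
theorem tp_positive_d3_strict_sum_loss (α : ℝ) (hα0 : 0 < α) (hα1 : α < 1) :
    ∀ d : ℝ × ℝ × ℝ, d ∈ Treg α → 0 < d.2.2 → d.1 + d.2.1 + d.2.2 < 1 + α := by
  intro d hd hd3
  have hlin : IsLinearMap ℝ (fun d : ℝ × ℝ × ℝ => d.1 + d.2.1 + (1 + α) * d.2.2) := by
    constructor
    · intro x y; simp [Prod.fst_add, Prod.snd_add]; ring
    · intro c x; simp [Prod.smul_fst, Prod.smul_snd, smul_eq_mul]; ring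
  have hconv : Convex ℝ {p : ℝ × ℝ × ℝ | p.1 + p.2.1 + (1 + α) * p.2.2 ≤ 1 + α} :=
    convex_halfSpace_le hlin (1 + α)
  have hsub : Treg α ⊆ {p : ℝ × ℝ × ℝ | p.1 + p.2.1 + (1 + α) * p.2.2 ≤ 1 + α} := by
    apply convexHull_min _ hconv
    rintro p (⟨q, hq, rfl⟩ | hp)
    · simpa using hq.2.2.2.2
    · simp at hp; simp [hp]
  have h := hsub hd
  simp only [Set.mem_setOf_eq] at h
  nlinarith
end

section
/- (Rate–WMMSE relationship, Proposition 1.) Fix a ∈ ℂ and T ∈ ℝ with T > 0 and |a|² < T. Then the infimum over all weights w > 0 and equalizers g ∈ ℂ of the weighted MSE ξ(w,g) = w·(|g|²T − 2Re(g·a) + 1) − ln w equals 1 − R, where R = ln(1 + |a|²/(T − |a|²)); moreover this infimum is attained at g* = conj(a)/T and w* = T/(T − |a|²). -/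
/-- Rate–WMMSE relationship (Proposition 1). Fix `a ∈ ℂ` and `T ∈ ℝ` with `T > 0` and
`|a|² < T`. The infimum over all weights `w > 0` and equalizers `g ∈ ℂ` of the weighted MSE
`ξ(w,g) = w·(|g|²T − 2·Re(g·a) + 1) − ln w` equals `1 − R`, where
`R = ln(1 + |a|²/(T − |a|²))`; moreover it is attained at `g* = conj(a)/T` and
`w* = T/(T − |a|²)`. -/
theorem rate_wmmse_relationship (a : ℂ) (T : ℝ) (hT : 0 < T) (ha : ‖a‖ ^ 2 < T) :
    IsLeast {x : ℝ | ∃ w : ℝ, 0 < w ∧ ∃ g : ℂ,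
        x = w * (‖g‖ ^ 2 * T - 2 * (g * a).re + 1) - Real.log w}
      (1 - Real.log (1 + ‖a‖ ^ 2 / (T - ‖a‖ ^ 2))) ∧
    (T / (T - ‖a‖ ^ 2)) *
        (‖(starRingEnd ℂ a / (T : ℂ))‖ ^ 2 * T - 2 * ((starRingEnd ℂ a / (T : ℂ)) * a).re + 1)
        - Real.log (T / (T - ‖a‖ ^ 2))
      = 1 - Real.log (1 + ‖a‖ ^ 2 / (T - ‖a‖ ^ 2)) := by
  set m : ℝ := T - ‖a‖ ^ 2 with hm
  have hm0 : 0 < m := by rw [hm]; linarith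
  have hne : m ≠ 0 := hm0.ne'
  have hlog : 1 + ‖a‖ ^ 2 / m = T / m := by
    rw [eq_div_iff hne, add_mul, div_mul_cancel₀ _ hne, hm]
    ring
  -- value at the optimum
  have hgnorm : ‖(starRingEnd ℂ a / (T : ℂ))‖ ^ 2 = ‖a‖ ^ 2 / T ^ 2 := by
    rw [norm_div]
    simp [div_pow, Complex.norm_real, abs_of_pos hT]
  have hre : ((starRingEnd ℂ a / (T : ℂ)) * a).re = ‖a‖ ^ 2 / T := by
    have : (starRingEnd ℂ a / (T : ℂ)) * a = ((‖a‖ ^ 2 / T : ℝ) : ℂ) := by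
      rw [div_mul_eq_mul_div, ← Complex.normSq_eq_conj_mul_self,
        Complex.normSq_eq_norm_sq]
      push_cast
      ring
    rw [this, Complex.ofReal_re]
  have hval : (T / m) * (‖(starRingEnd ℂ a / (T : ℂ))‖ ^ 2 * T
      - 2 * ((starRingEnd ℂ a / (T : ℂ)) * a).re + 1) - Real.log (T / m)
      = 1 - Real.log (1 + ‖a‖ ^ 2 / m) := by
    rw [hgnorm, hre, hlog]
    congr 1
    have h2 : T - ‖a‖ ^ 2 ≠ 0 := hm ▸ hne
    rw [hm]
    field_simp
    ring
  refine ⟨⟨⟨T / m, div_pos hT hm0, starRingEnd ℂ a / (T : ℂ), hval.symm⟩, ?_⟩, hval⟩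
  rintro x ⟨w, hw, g, rfl⟩
  have hc : m / T ≤ ‖g‖ ^ 2 * T - 2 * (g * a).re + 1 := by
    have h1 : (g * a).re ≤ ‖g‖ * ‖a‖ := by
      calc (g * a).re ≤ ‖g * a‖ := Complex.re_le_norm _
        _ = ‖g‖ * ‖a‖ := norm_mul _ _
    rw [div_le_iff₀ hT]
    nlinarith [sq_nonneg (T * ‖g‖ - ‖a‖), norm_nonneg g, norm_nonneg a]
  have hwc : 1 + Real.log (m / T) ≤ w * (m / T) - Real.log w := by
    have h2 := Real.log_le_sub_one_of_pos (mul_pos hw (div_pos hm0 hT))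
    rw [Real.log_mul (ne_of_gt hw) (ne_of_gt (div_pos hm0 hT))] at h2
    linarith
  have hlog2 : Real.log (m / T) = - Real.log (T / m) := by
    rw [← Real.log_inv, inv_div]
  rw [hlog]
  have : w * (m / T) ≤ w * (‖g‖ ^ 2 * T - 2 * (g * a).re + 1) :=
    mul_le_mul_of_nonneg_left hc (le_of_lt hw)
  rw [hlog2] at hwc
  linarith
end
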